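/- Let μ be a probability measure on {0,1}^E for a countable edge set E, and for an edge e with 0 < μ[ω(e)=1] < 1 let μ_e and μ_{¬e} denote μ conditioned on ω(e)=1 and ω(e)=0 respectively, both restricted to the σ-field generated by the coordinates in E∖{e}. Then the following are equivalent: (a) the completion of the σ-field generated by the coordinate at e is contained in the completed σ-field generated by the other coordinates (change intolerance at e); (b) μ_e ⊥ μ_{¬e}. -/

import Mathlib

open MeasureTheory ProbabilityTheory

/-- The σ-field on configurations `{0,1}^E` generated by the coordinates in
`K ⊆ E`. -/
def coordSigma (E : Type*) (K : Set E) : MeasurableSpace (E → Bool) :=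
  ⨆ e ∈ K, MeasurableSpace.comap (fun ω => ω e) ⊤

lemma coordSigma_le (E : Type*) (K : Set E) :
    coordSigma E K ≤ MeasurableSpace.pi :=
  iSup₂_le fun e _ => (measurable_pi_apply e).comap_le

/-- The `μ`-completion of a sub-σ-field `m₀`: the σ-field generated by all
sets differing from an `m₀`-measurable set by a `μ`-null set. -/
def completionOf {Ω : Type*} [MeasurableSpace Ω] (μ : Measure Ω)
    (m₀ : MeasurableSpace Ω) : MeasurableSpace Ω :=
  MeasurableSpace.generateFrom
    {A | ∃ B, MeasurableSet[m₀] B ∧ μ (symmDiff A B) = 0}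

section Aux

variable {Ω : Type*} [MeasurableSpace Ω]

lemma aux_symmDiff_null_trans (μ : Measure Ω) {A B C : Set Ω}
    (h1 : μ (symmDiff A B) = 0) (h2 : μ (symmDiff B C) = 0) :
    μ (symmDiff A C) = 0 := by
  refine le_antisymm ?_ zero_le
  calc μ (symmDiff A C) ≤ μ (symmDiff A B ∪ symmDiff B C) :=
        measure_mono (symmDiff_triangle A B C)
    _ ≤ μ (symmDiff A B) + μ (symmDiff B C) := measure_union_le _ _
    _ = 0 := by rw [h1, h2, add_zero]

omit [MeasurableSpace Ω] in
lemma aux_iUnion_symmDiff {ι : Type*} (f g : ι → Set Ω) :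
    symmDiff (⋃ i, f i) (⋃ i, g i) ⊆ ⋃ i, symmDiff (f i) (g i) := by
  intro x hx
  rw [Set.mem_symmDiff] at hx
  rcases hx with ⟨hf, hg⟩ | ⟨hg, hf⟩
  · obtain ⟨i, hi⟩ := Set.mem_iUnion.1 hf
    exact Set.mem_iUnion.2
      ⟨i, Set.mem_symmDiff.2 (Or.inl ⟨hi, fun h => hg (Set.mem_iUnion.2 ⟨i, h⟩)⟩)⟩
  · obtain ⟨i, hi⟩ := Set.mem_iUnion.1 hg
    exact Set.mem_iUnion.2
      ⟨i, Set.mem_symmDiff.2 (Or.inr ⟨hi, fun h => hf (Set.mem_iUnion.2 ⟨i, h⟩)⟩)⟩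

end Aux

/-- The collection of sets differing from an `m₀`-measurable set by a `μ`-null
set is a σ-algebra. -/
def nullDiffAlgebra {Ω : Type*} (mΩ : MeasurableSpace Ω) (μ : Measure Ω)
    (m₀ : MeasurableSpace Ω) : MeasurableSpace Ω where
  MeasurableSet' A := ∃ B, MeasurableSet[m₀] B ∧ μ (symmDiff A B) = 0
  measurableSet_empty := ⟨∅, @MeasurableSet.empty _ m₀, by simp⟩
  measurableSet_compl := by
    rintro A ⟨B, hB, hAB⟩
    exact ⟨Bᶜ, @MeasurableSet.compl _ _ m₀ hB, by rwa [compl_symmDiff_compl]⟩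
  measurableSet_iUnion := by
    intro f hf
    choose B hB hB0 using hf
    refine ⟨⋃ i, B i, @MeasurableSet.iUnion _ _ m₀ _ _ hB, ?_⟩
    refine le_antisymm ?_ zero_le
    calc μ (symmDiff (⋃ i, f i) (⋃ i, B i)) ≤ μ (⋃ i, symmDiff (f i) (B i)) :=
          measure_mono (aux_iUnion_symmDiff f B)
      _ ≤ ∑' i, μ (symmDiff (f i) (B i)) := measure_iUnion_le _
      _ = 0 := by simp [hB0]

lemma mem_nullDiff_of_completion {Ω : Type*} {mΩ : MeasurableSpace Ω}
    {μ : Measure Ω} {m₀ : MeasurableSpace Ω} {A : Set Ω}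
    (hA : MeasurableSet[MeasurableSpace.generateFrom
      {A | ∃ B, MeasurableSet[m₀] B ∧ μ (symmDiff A B) = 0}] A) :
    ∃ B, MeasurableSet[m₀] B ∧ μ (symmDiff A B) = 0 :=
  @MeasurableSpace.generateFrom_le _ _ (nullDiffAlgebra mΩ μ m₀) (fun _ h => h) A hA

/-- **Change intolerance at an edge is equivalent to mutual singularity of the
conditioned measures.**  Let `μ` be a probability measure on `{0,1}^E` and `e`
an edge with `0 < μ[ω(e)=1] < 1`.  Then the `μ`-completion of the σ-field
generated by the coordinate at `e` is contained in the `μ`-completion of the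
σ-field generated by the other coordinates if and only if `μ_e ⊥ μ_{¬e}`,
where `μ_e` (resp. `μ_{¬e}`) is `μ` conditioned on `ω(e)=1` (resp. `ω(e)=0`)
and restricted to the σ-field generated by the coordinates in `E ∖ {e}`. -/
theorem change_intolerant_iff_mutuallySingular
    (E : Type*) [Countable E] (μ : Measure (E → Bool)) [IsProbabilityMeasure μ]
    (e : E) (h0 : 0 < μ {ω | ω e = true}) (h1 : μ {ω | ω e = true} < 1) :
    completionOf μ (coordSigma E {e}) ≤ completionOf μ (coordSigma E ({e}ᶜ))
      ↔
    Measure.MutuallySingular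
      ((μ[|{ω | ω e = true}]).trim (coordSigma_le E ({e}ᶜ)))
      ((μ[|{ω | ω e = false}]).trim (coordSigma_le E ({e}ᶜ))) := by
  have hSmeas : MeasurableSet {ω : E → Bool | ω e = true} :=
    show MeasurableSet ((fun ω : E → Bool => ω e) ⁻¹' {true}) from
      measurable_pi_apply e (measurableSet_singleton true)
  have hSc : {ω : E → Bool | ω e = false} = {ω : E → Bool | ω e = true}ᶜ := by
    ext ω; simp [Bool.not_eq_true]
  have hSne : μ {ω : E → Bool | ω e = true} ≠ ⊤ :=
    (lt_of_le_of_lt prob_le_one (by norm_num)).ne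
  have hScne : μ {ω : E → Bool | ω e = true}ᶜ ≠ ⊤ :=
    (lt_of_le_of_lt prob_le_one (by norm_num)).ne
  constructor
  · intro h
    -- `S` is measurable in the completion of `coordSigma {e}`
    have hle : MeasurableSpace.comap (fun ω : E → Bool => ω e) ⊤ ≤ coordSigma E {e} :=
      le_iSup₂ (f := fun (e' : E) (_ : e' ∈ ({e} : Set E)) =>
        MeasurableSpace.comap (fun ω : E → Bool => ω e') ⊤) e rfl
    have hSgen : MeasurableSet[completionOf μ (coordSigma E {e})]
        {ω : E → Bool | ω e = true} :=
      MeasurableSpace.measurableSet_generateFrom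
        ⟨{ω : E → Bool | ω e = true},
          hle _ ⟨{true}, MeasurableSpace.measurableSet_top, rfl⟩, by simp⟩
    obtain ⟨B, hBm, hB0⟩ := mem_nullDiff_of_completion (h _ hSgen)
    have e1 : (μ[|{ω : E → Bool | ω e = true}]).trim (coordSigma_le E ({e}ᶜ)) Bᶜ = 0 := by
      rw [trim_measurableSet_eq (coordSigma_le E ({e}ᶜ))
        (@MeasurableSet.compl _ _ (coordSigma E {e}ᶜ) hBm), cond_apply hSmeas]
      have : μ ({ω : E → Bool | ω e = true} ∩ Bᶜ) = 0 := measure_mono_null (fun x hx =>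
        Set.mem_symmDiff.2 (Or.inl ⟨hx.1, hx.2⟩)) hB0
      rw [this, mul_zero]
    have e2 : (μ[|{ω : E → Bool | ω e = false}]).trim (coordSigma_le E ({e}ᶜ)) B = 0 := by
      rw [trim_measurableSet_eq (coordSigma_le E ({e}ᶜ)) hBm, hSc, cond_apply hSmeas.compl]
      have : μ ({ω : E → Bool | ω e = true}ᶜ ∩ B) = 0 := measure_mono_null (fun x hx =>
        Set.mem_symmDiff.2 (Or.inr ⟨hx.2, hx.1⟩)) hB0
      rw [this, mul_zero]
    exact Measure.MutuallySingular.mk e1 e2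
      (fun x _ => (Classical.em (x ∈ B)).elim Or.inr Or.inl)
  · intro h
    obtain ⟨t, htm, ht1, ht2⟩ := h
    rw [trim_measurableSet_eq (coordSigma_le E ({e}ᶜ)) htm, cond_apply hSmeas] at ht1
    rw [trim_measurableSet_eq (coordSigma_le E ({e}ᶜ))
      (@MeasurableSet.compl _ _ (coordSigma E {e}ᶜ) htm), hSc,
      cond_apply hSmeas.compl] at ht2
    have hSt : μ ({ω : E → Bool | ω e = true} ∩ t) = 0 := by
      rcases mul_eq_zero.1 ht1 with h' | h'
      · exact absurd (ENNReal.inv_eq_zero.1 h') hSne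
      · exact h'
    have hSct : μ ({ω : E → Bool | ω e = true}ᶜ ∩ tᶜ) = 0 := by
      rcases mul_eq_zero.1 ht2 with h' | h'
      · exact absurd (ENNReal.inv_eq_zero.1 h') hScne
      · exact h'
    have hkey : μ (symmDiff {ω : E → Bool | ω e = true} tᶜ) = 0 := by
      refine le_antisymm ?_ zero_le
      calc μ (symmDiff {ω : E → Bool | ω e = true} tᶜ)
          ≤ μ (({ω : E → Bool | ω e = true} ∩ t) ∪ ({ω : E → Bool | ω e = true}ᶜ ∩ tᶜ)) := by
            refine measure_mono fun x hx => ?_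
            rcases Set.mem_symmDiff.1 hx with ⟨hx1, hx2⟩ | ⟨hx1, hx2⟩
            · exact Or.inl ⟨hx1, not_not.1 hx2⟩
            · exact Or.inr ⟨hx2, hx1⟩
        _ ≤ μ ({ω : E → Bool | ω e = true} ∩ t) + μ ({ω : E → Bool | ω e = true}ᶜ ∩ tᶜ) :=
            measure_union_le _ _
        _ = 0 := by rw [hSt, hSct, add_zero]
    -- every `coordSigma {e}`-measurable set is in the null-diff algebra
    have hcoord : coordSigma E {e} ≤ nullDiffAlgebra _ μ (coordSigma E ({e}ᶜ)) := by
      refine iSup₂_le fun e' he' => ?_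
      rcases he' with rfl
      rintro A ⟨s, -, rfl⟩
      by_cases hts : true ∈ s <;> by_cases hfs : false ∈ s
      · have hset : (fun ω : E → Bool => ω e') ⁻¹' s = Set.univ := by
          ext ω; simp only [Set.mem_preimage, Set.mem_univ, iff_true]
          cases hωe : ω e' <;> assumption
        rw [hset]
        exact ⟨Set.univ, @MeasurableSet.univ _ (coordSigma E {e'}ᶜ), by simp⟩
      · have hset : (fun ω : E → Bool => ω e') ⁻¹' s = {ω : E → Bool | ω e' = true} := by
          ext ω; simp only [Set.mem_preimage, Set.mem_setOf_eq]
          cases hωe : ω e' <;> simp_all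
        rw [hset]
        exact ⟨tᶜ, @MeasurableSet.compl _ _ (coordSigma E {e'}ᶜ) htm, hkey⟩
      · have hset : (fun ω : E → Bool => ω e') ⁻¹' s = {ω : E → Bool | ω e' = true}ᶜ := by
          ext ω; simp only [Set.mem_preimage, Set.mem_compl_iff, Set.mem_setOf_eq]
          cases hωe : ω e' <;> simp_all
        rw [hset]
        refine ⟨t, htm, ?_⟩
        have : symmDiff {ω : E → Bool | ω e' = true}ᶜ t
            = symmDiff {ω : E → Bool | ω e' = true} tᶜ := by
          rw [← compl_symmDiff_compl (a := {ω : E → Bool | ω e' = true}ᶜ), compl_compl]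
        rw [this]; exact hkey
      · have hset : (fun ω : E → Bool => ω e') ⁻¹' s = ∅ := by
          ext ω; simp only [Set.mem_preimage, Set.mem_empty_iff_false, iff_false]
          cases hωe : ω e' <;> assumption
        rw [hset]
        exact ⟨∅, @MeasurableSet.empty _ (coordSigma E {e'}ᶜ), by simp⟩
    unfold completionOf
    refine MeasurableSpace.generateFrom_le ?_
    rintro A ⟨B, hB, hAB⟩
    obtain ⟨C, hCm, hBC⟩ := hcoord B hB
    exact MeasurableSpace.measurableSet_generateFrom
      ⟨C, hCm, aux_symmDiff_null_trans μ hAB hBC⟩
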